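/- arXiv:1306.5338 — 6 statements merged into one kernel-verified Lean document; each statement's English description precedes it below -/
import Mathlib

section
/- Let X₀ be a real symmetric n×n matrix whose largest eigenvalue λ₁ is positive and simple, with unit eigenvector w₁. Then as t → (1/λ₁)⁻, the normalized matrix X(t)/‖X(t)‖_F converges to the rank-one matrix w₁ w₁ᵀ, where X(t) = X₀(I − tX₀)⁻¹ and ‖·‖_F is the Frobenius norm. -/
open Matrix Filter

attribute [local instance] Matrix.frobeniusNormedAddCommGroup Matrix.frobeniusNormedSpace

/-- For symmetric `X₀` with simple, strictly largest eigenvalue `λ₁ > 0` and unit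
eigenvector `w₁`, the normalized solution `X(t)/‖X(t)‖_F` converges to `w₁ w₁ᵀ`
as `t → (1/λ₁)⁻`, where `X(t) = X₀ (I - t X₀)⁻¹`. -/
theorem normalized_solution_tendsto_rank_one {n : ℕ} (X₀ : Matrix (Fin n) (Fin n) ℝ)
    (hsym : X₀ᵀ = X₀) (lam1 : ℝ) (hpos : 0 < lam1) (w1 : Fin n → ℝ)
    (heig : X₀.mulVec w1 = lam1 • w1)
    (hunit : ∑ i, w1 i ^ 2 = 1)
    (hsimple : ∀ v : Fin n → ℝ, v ≠ 0 → X₀.mulVec v = lam1 • v → ∃ c : ℝ, v = c • w1)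
    (hmax : ∀ μ : ℝ, μ ≠ lam1 → (∃ v, v ≠ 0 ∧ X₀.mulVec v = μ • v) → μ < lam1) :
    Tendsto
      (fun t : ℝ => ‖X₀ * ((1 : Matrix (Fin n) (Fin n) ℝ) - t • X₀)⁻¹‖⁻¹ •
        (X₀ * (1 - t • X₀)⁻¹))
      (nhdsWithin (1 / lam1) (Set.Iio (1 / lam1)))
      (nhds (Matrix.of fun i j => w1 i * w1 j)) := by
  set P : Matrix (Fin n) (Fin n) ℝ := Matrix.of fun i j => w1 i * w1 j with hPdef
  set R : Matrix (Fin n) (Fin n) ℝ := X₀ - lam1 • P with hRdef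
  -- basic entrywise facts
  have hXP : X₀ * P = lam1 • P := by
    ext i j
    have h := congrFun heig i
    simp [Matrix.mulVec, dotProduct] at h
    simp [hPdef, Matrix.mul_apply, ← mul_assoc, ← Finset.sum_mul, h]
  have hPX : P * X₀ = lam1 • P := by
    ext i j
    have h := congrFun heig j
    simp [Matrix.mulVec, dotProduct] at h
    have hs : ∀ k, X₀ k j = X₀ j k := fun k => by
      conv_lhs => rw [← hsym, Matrix.transpose_apply]
    simp only [hPdef, Matrix.mul_apply, Matrix.of_apply, Matrix.smul_apply, smul_eq_mul]
    calc ∑ k, w1 i * w1 k * X₀ k j = w1 i * ∑ k, X₀ j k * w1 k := by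
          rw [Finset.mul_sum]; congr 1; ext k; rw [hs k]; ring
      _ = lam1 * (w1 i * w1 j) := by rw [h]; ring
  have hPP : P * P = P := by
    ext i j
    simp only [hPdef, Matrix.mul_apply, Matrix.of_apply]
    calc ∑ k, w1 i * w1 k * (w1 k * w1 j) = (w1 i * w1 j) * ∑ k, w1 k ^ 2 := by
          rw [Finset.mul_sum]; congr 1; ext k; ring
      _ = w1 i * w1 j := by rw [hunit]; ring
  have hRP : R * P = 0 := by
    rw [hRdef, Matrix.sub_mul, hXP, Matrix.smul_mul, hPP, sub_self]
  have hPR : P * R = 0 := by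
    rw [hRdef, Matrix.mul_sub, hPX, Matrix.mul_smul, hPP, sub_self]
  have hw1 : w1 ≠ 0 := by
    intro h
    rw [h] at hunit
    simp at hunit
  -- invertibility of 1 - t • R for 0 < t ≤ 1/lam1
  have hinvR : ∀ t : ℝ, 0 < t → t ≤ 1 / lam1 → IsUnit (1 - t • R).det := by
    intro t ht0 ht1
    rw [isUnit_iff_ne_zero]
    intro hdet
    obtain ⟨v, hv, hv0⟩ := Matrix.exists_mulVec_eq_zero_iff.mpr hdet
    have h1 : v = t • R.mulVec v := by
      rw [Matrix.sub_mulVec, Matrix.one_mulVec, Matrix.smul_mulVec, sub_eq_zero] at hv0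
      exact hv0
    have hPv : P.mulVec v = 0 := by
      conv_lhs => rw [h1]
      rw [Matrix.mulVec_smul, Matrix.mulVec_mulVec, hPR, Matrix.zero_mulVec, smul_zero]
    have hdot : ∑ k, w1 k * v k = 0 := by
      obtain ⟨i, hi⟩ := Function.ne_iff.mp hw1
      have := congrFun hPv i
      simp only [hPdef, Matrix.mulVec, dotProduct, Matrix.of_apply, Pi.zero_apply] at this
      have h2 : w1 i * ∑ k, w1 k * v k = 0 := by
        rw [Finset.mul_sum]; rw [← this]; congr 1; ext k; ring
      rcases mul_eq_zero.mp h2 with h | h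
      · exact absurd h hi
      · exact h
    have hRv : R.mulVec v = X₀.mulVec v := by
      rw [hRdef, Matrix.sub_mulVec, Matrix.smul_mulVec, hPv, smul_zero, sub_zero]
    have hX : X₀.mulVec v = t⁻¹ • v := by
      rw [← hRv]
      have := congrArg (fun u => t⁻¹ • u) h1
      simp only [smul_smul, inv_mul_cancel₀ (ne_of_gt ht0), one_smul] at this
      exact this.symm
    by_cases hcase : t⁻¹ = lam1
    · rw [hcase] at hX
      obtain ⟨c, hc⟩ := hsimple v hv hX
      have : c = 0 := by
        rw [hc] at hdot
        simp only [Pi.smul_apply, smul_eq_mul] at hdot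
        have : c * ∑ k, w1 k ^ 2 = 0 := by
          rw [Finset.mul_sum]; rw [← hdot]; congr 1; ext k; ring
        rwa [hunit, mul_one] at this
      rw [this, zero_smul] at hc
      exact hv hc
    · have hlt := hmax t⁻¹ hcase ⟨v, hv, hX⟩
      have : lam1 ≤ t⁻¹ := by
        rw [← one_div]
        rw [le_div_iff₀ ht0]
        calc lam1 * t ≤ lam1 * (1 / lam1) := by
              exact mul_le_mul_of_nonneg_left ht1 (le_of_lt hpos)
          _ = 1 := by field_simp
      linarith
  -- invertibility of 1 - t • X₀ for 0 < t < 1/lam1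
  have hinvX : ∀ t : ℝ, 0 < t → t < 1 / lam1 → IsUnit (1 - t • X₀).det := by
    intro t ht0 ht1
    rw [isUnit_iff_ne_zero]
    intro hdet
    obtain ⟨v, hv, hv0⟩ := Matrix.exists_mulVec_eq_zero_iff.mpr hdet
    have h1 : v = t • X₀.mulVec v := by
      rw [Matrix.sub_mulVec, Matrix.one_mulVec, Matrix.smul_mulVec, sub_eq_zero] at hv0
      exact hv0
    have hX : X₀.mulVec v = t⁻¹ • v := by
      have := congrArg (fun u => t⁻¹ • u) h1
      simp only [smul_smul, inv_mul_cancel₀ (ne_of_gt ht0), one_smul] at this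
      exact this.symm
    have hgt : lam1 < t⁻¹ := by
      rw [← one_div, lt_div_iff₀ ht0]
      calc lam1 * t < lam1 * (1 / lam1) := by
            exact mul_lt_mul_of_pos_left ht1 hpos
        _ = 1 := by field_simp
    have hlt := hmax t⁻¹ (ne_of_gt hgt) ⟨v, hv, hX⟩
    linarith
  -- key identity
  have hkey : ∀ t : ℝ, 0 < t → t < 1 / lam1 →
      X₀ * (1 - t • X₀)⁻¹ = (lam1 / (1 - t * lam1)) • P + R * (1 - t • R)⁻¹ := by
    intro t ht0 ht1
    have hden : 1 - t * lam1 ≠ 0 := by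
      have : t * lam1 < 1 := by
        rw [← lt_div_iff₀ hpos]; exact ht1
      linarith
    set Q : Matrix (Fin n) (Fin n) ℝ := (1 - t • R)⁻¹ with hQdef
    have hQ1 : (1 - t • R) * Q = 1 := Matrix.mul_nonsing_inv _ (hinvR t ht0 (le_of_lt ht1))
    have hQ2 : Q * (1 - t • R) = 1 := Matrix.nonsing_inv_mul _ (hinvR t ht0 (le_of_lt ht1))
    have hQP : Q * P = P := by
      have h1 : (1 - t • R) * P = P := by
        rw [Matrix.sub_mul, Matrix.one_mul, Matrix.smul_mul, hRP, smul_zero, sub_zero]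
      calc Q * P = Q * ((1 - t • R) * P) := by rw [h1]
        _ = (Q * (1 - t • R)) * P := by rw [Matrix.mul_assoc]
        _ = P := by rw [hQ2, Matrix.one_mul]
    set a : ℝ := lam1 / (1 - t * lam1) with hadef
    set L : Matrix (Fin n) (Fin n) ℝ := a • P + R * Q with hLdef
    have hX0 : X₀ = lam1 • P + R := by rw [hRdef]; abel
    have hLX : L * X₀ = (a * lam1) • P + R * Q * R := by
      rw [hLdef, Matrix.add_mul, Matrix.smul_mul, hPX, smul_smul]
      congr 1
      calc R * Q * X₀ = R * Q * (lam1 • P + R) := by rw [← hX0]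
        _ = lam1 • (R * (Q * P)) + R * Q * R := by
            rw [Matrix.mul_add, Matrix.mul_smul, Matrix.mul_assoc]
        _ = R * Q * R := by rw [hQP, hRP, smul_zero, zero_add]
    have hkey2 : L * (1 - t • X₀) = X₀ := by
      rw [Matrix.mul_sub, Matrix.mul_one, Matrix.mul_smul, hLX]
      have e1 : L - t • ((a * lam1) • P + R * Q * R)
          = (a - t * (a * lam1)) • P + (R * Q - t • (R * Q * R)) := by
        rw [hLdef]
        rw [smul_add, sub_smul]
        module
      rw [e1]
      have e2 : a - t * (a * lam1) = lam1 := by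
        rw [hadef, show lam1 / (1 - t * lam1) - t * (lam1 / (1 - t * lam1) * lam1) = lam1 / (1 - t * lam1) * (1 - t * lam1) by ring, div_mul_cancel₀ _ hden]
      have e3 : R * Q - t • (R * Q * R) = R := by
        have e3' : R * Q * (1 - t • R) = R * Q - t • (R * Q * R) := by
          conv_lhs => rw [Matrix.mul_sub, Matrix.mul_one, Matrix.mul_smul]
        calc R * Q - t • (R * Q * R) = R * Q * (1 - t • R) := e3'.symm
          _ = R * (Q * (1 - t • R)) := by rw [Matrix.mul_assoc]
          _ = R := by rw [hQ2, Matrix.mul_one]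
      rw [e2, e3, ← hX0]
    calc X₀ * (1 - t • X₀)⁻¹ = (L * (1 - t • X₀)) * (1 - t • X₀)⁻¹ := by rw [hkey2]
      _ = L * ((1 - t • X₀) * (1 - t • X₀)⁻¹) := by rw [Matrix.mul_assoc]
      _ = L := by rw [Matrix.mul_nonsing_inv _ (hinvX t ht0 ht1), Matrix.mul_one]
  -- norm of P is 1
  have hnormP : ‖P‖ = 1 := by
    rw [Matrix.frobenius_norm_def]
    have : ∀ i j : Fin n, ‖P i j‖ ^ (2 : ℝ) = w1 i ^ 2 * w1 j ^ 2 := by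
      intro i j
      rw [Real.rpow_two, Real.norm_eq_abs, sq_abs, hPdef]
      simp only [Matrix.of_apply]
      ring
    rw [Finset.sum_congr rfl fun i _ => Finset.sum_congr rfl fun j _ => this i j]
    simp_rw [← Finset.mul_sum, hunit, mul_one, hunit]
    norm_num
  -- the auxiliary function G
  set G : ℝ → Matrix (Fin n) (Fin n) ℝ :=
    fun t => P + ((1 - t * lam1) / lam1) • (R * (1 - t • R)⁻¹) with hGdef
  have ht₀pos : 0 < 1 / lam1 := by positivity
  -- continuity of G at 1/lam1
  have hGtend : Tendsto G (nhdsWithin (1 / lam1) (Set.Iio (1 / lam1))) (nhds P) := by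
    have hGc : ContinuousAt G (1 / lam1) := by
      have hinv : ContinuousAt (fun t : ℝ => (1 - t • R)⁻¹) (1 / lam1) := by
        have h1 : ContinuousAt (fun t : ℝ => (1 : Matrix (Fin n) (Fin n) ℝ) - t • R) (1 / lam1) :=
          (continuousAt_const.sub ((continuousAt_id).smul continuousAt_const))
        have h2 : ContinuousAt Inv.inv ((1 : Matrix (Fin n) (Fin n) ℝ) - (1 / lam1) • R) := by
          apply continuousAt_matrix_inv
          have hd := hinvR (1 / lam1) ht₀pos le_rfl
          rw [isUnit_iff_ne_zero] at hd
          have : ContinuousAt (fun x : ℝ => x⁻¹) ((1 - (1 / lam1) • R).det) :=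
            continuousAt_inv₀ hd
          simpa [Ring.inverse_eq_inv'] using this
        exact ContinuousAt.comp (g := Inv.inv)
          (f := fun t : ℝ => (1 : Matrix (Fin n) (Fin n) ℝ) - t • R) h2 h1
      apply ContinuousAt.add continuousAt_const
      apply ContinuousAt.smul (f := fun t : ℝ => (1 - t * lam1) / lam1) (g := fun t : ℝ => R * (1 - t • R)⁻¹)
      · exact (continuousAt_const.sub (continuousAt_id.mul continuousAt_const)).div
          continuousAt_const (ne_of_gt hpos)
      · exact continuousAt_const.mul hinv
    have hG0 : G (1 / lam1) = P := by
      rw [hGdef]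
      simp only []
      have : 1 - (1 / lam1) * lam1 = 0 := by rw [one_div, inv_mul_cancel₀ (ne_of_gt hpos), sub_self]
      rw [this, zero_div, zero_smul, add_zero]
    have := hGc.tendsto
    rw [hG0] at this
    exact this.mono_left nhdsWithin_le_nhds
  -- limit of normalized G
  have hnorm_tend : Tendsto (fun t => ‖G t‖⁻¹ • G t)
      (nhdsWithin (1 / lam1) (Set.Iio (1 / lam1))) (nhds P) := by
    have h1 : Tendsto (fun t => ‖G t‖) (nhdsWithin (1 / lam1) (Set.Iio (1 / lam1))) (nhds 1) := by
      have := (continuous_norm.tendsto P).comp hGtend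
      rwa [hnormP] at this
    have h2 : Tendsto (fun t => ‖G t‖⁻¹) (nhdsWithin (1 / lam1) (Set.Iio (1 / lam1)))
        (nhds 1) := by
      have := h1.inv₀ one_ne_zero
      rwa [inv_one] at this
    have := h2.smul hGtend
    rwa [one_smul] at this
  -- eventual equality
  apply hnorm_tend.congr'
  have hmem : Set.Ioo 0 (1 / lam1) ∈ nhdsWithin (1 / lam1) (Set.Iio (1 / lam1)) := by
    rw [mem_nhdsWithin]
    exact ⟨Set.Ioi 0, isOpen_Ioi, ht₀pos, fun x hx => ⟨hx.1, hx.2⟩⟩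
  filter_upwards [hmem] with t ht
  obtain ⟨ht0, ht1⟩ := ht
  have hden : 0 < 1 - t * lam1 := by
    have : t * lam1 < 1 := by rw [← lt_div_iff₀ hpos]; exact ht1
    linarith
  have ha : 0 < lam1 / (1 - t * lam1) := div_pos hpos hden
  have hXG : X₀ * (1 - t • X₀)⁻¹ = (lam1 / (1 - t * lam1)) • G t := by
    rw [hkey t ht0 ht1, hGdef]
    simp only []
    rw [smul_add, smul_smul]
    congr 2
    rw [show lam1 / (1 - t * lam1) * ((1 - t * lam1) / lam1) = 1 by rw [div_mul_div_comm, mul_comm lam1, div_self (mul_ne_zero (ne_of_gt hden) (ne_of_gt hpos))], one_smul]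
  rw [hXG, norm_smul]
  rw [Real.norm_eq_abs, abs_of_pos ha, smul_smul]
  congr 1
  rw [mul_inv]
  rw [mul_assoc]  -- (a⁻¹ * ‖G t‖⁻¹) * a
  rw [mul_comm (‖G t‖⁻¹) _, ← mul_assoc, inv_mul_cancel₀ (ne_of_gt ha), one_mul]
end

section
/- A complete signed graph on n ≥ 3 vertices is structurally balanced (every triangle has positive sign product) if and only if the vertex set can be partitioned into two (possibly empty) sets such that every edge within a set is positive and every edge between the two sets is negative. -/
/-- Cartwright–Harary structure theorem: a complete signed graph on `n ≥ 3` vertices is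
structurally balanced iff the vertex set can be partitioned into two (possibly empty)
sets with positive edges within each set and negative edges between the sets. -/
theorem structural_balance_iff_two_factions {n : ℕ} (hn : 3 ≤ n)
    (σ : Fin n → Fin n → ℤ)
    (hsym : ∀ i j, σ i j = σ j i)
    (hval : ∀ i j, i ≠ j → σ i j = 1 ∨ σ i j = -1) :
    (∀ i j k : Fin n, i ≠ j → j ≠ k → i ≠ k → σ i j * σ j k * σ i k = 1) ↔
    ∃ S : Set (Fin n), ∀ i j : Fin n, i ≠ j →
      (((i ∈ S ↔ j ∈ S) → σ i j = 1) ∧ (¬(i ∈ S ↔ j ∈ S) → σ i j = -1)) := by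
  constructor
  · intro hbal
    have hnz : 0 < n := by omega
    set z : Fin n := ⟨0, hnz⟩ with hz
    refine ⟨{i | i = z ∨ σ z i = 1}, ?_⟩
    intro i j hij
    by_cases hi : i = z
    · subst hi
      have hj : j ≠ z := fun h => hij h.symm
      have hv := hval z j (fun h => hj h.symm)
      constructor
      · intro h
        have : j ∈ {i | i = z ∨ σ z i = 1} := h.mp (Or.inl rfl)
        rcases this with h' | h'
        · exact absurd h' hj
        · exact h'
      · intro h
        rcases hv with h1 | h1
        · exact absurd (Iff.intro (fun _ => Or.inr h1) (fun _ => Or.inl rfl)) h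
        · exact h1
    · by_cases hj : j = z
      · subst hj
        have hv := hval z i (fun h => hi h.symm)
        rw [hsym i z]
        constructor
        · intro h
          have : i ∈ {i | i = z ∨ σ z i = 1} := h.mpr (Or.inl rfl)
          rcases this with h' | h'
          · exact absurd h' hi
          · exact h'
        · intro h
          rcases hv with h1 | h1
          · exact absurd (Iff.intro (fun _ => Or.inl rfl) (fun _ => Or.inr h1)) h
          · exact h1
      · have hzi : z ≠ i := fun h => hi h.symm
        have hzj : z ≠ j := fun h => hj h.symm
        have key := hbal z i j hzi hij hzj
        have hvi := hval z i hzi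
        have hvj := hval z j hzj
        have memi : i ∈ {i | i = z ∨ σ z i = 1} ↔ σ z i = 1 := by
          simp only [Set.mem_setOf_eq]
          exact ⟨fun h => h.resolve_left hi, Or.inr⟩
        have memj : j ∈ {i | i = z ∨ σ z i = 1} ↔ σ z j = 1 := by
          simp only [Set.mem_setOf_eq]
          exact ⟨fun h => h.resolve_left hj, Or.inr⟩
        rw [memi, memj] at *
        constructor
        · intro h
          rcases hvi with h1 | h1 <;> rcases hvj with h2 | h2 <;>
            rw [h1, h2] at key <;> try linarith
          · exact absurd (h.mp h1) (by rw [h2]; norm_num)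
          · exact absurd (h.mpr h2) (by rw [h1]; norm_num)
        · intro h
          rcases hvi with h1 | h1 <;> rcases hvj with h2 | h2 <;>
            rw [h1, h2] at key <;> try linarith
          · exact absurd ⟨fun _ => h2, fun _ => h1⟩ h
          · exact absurd ⟨fun hh => absurd hh (by rw [h1]; norm_num),
              fun hh => absurd hh (by rw [h2]; norm_num)⟩ h
  · rintro ⟨S, hS⟩ i j k hij hjk hik
    have e1 := hS i j hij
    have e2 := hS j k hjk
    have e3 := hS i k hik
    by_cases hi : i ∈ S <;> by_cases hj : j ∈ S <;> by_cases hk : k ∈ S <;>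
      simp_all
end

section
/- Let X₀ be a real symmetric n×n matrix, v* ∈ ℝⁿ a vector with v*₁ ≠ 0, and λ* ∈ ℝ. Then there exists a symmetric matrix ΔX₀, supported on the first row and column (ΔX₀_{ij} = 0 whenever i ≠ 1 and j ≠ 1), such that (X₀ + ΔX₀) v* = λ* v*. -/
open Matrix

/-- For any symmetric `X₀`, any `v*` with nonzero first coordinate and any `λ*`, there is
a symmetric perturbation `ΔX₀` supported on the first row and column such that
`(X₀ + ΔX₀) v* = λ* v*`. -/
theorem exists_single_agent_perturbation {n : ℕ} (X₀ : Matrix (Fin (n + 1)) (Fin (n + 1)) ℝ)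
    (hsym : X₀ᵀ = X₀) (v : Fin (n + 1) → ℝ) (hv : v 0 ≠ 0) (lam : ℝ) :
    ∃ ΔX : Matrix (Fin (n + 1)) (Fin (n + 1)) ℝ,
      ΔXᵀ = ΔX ∧
      (∀ i j, i ≠ 0 → j ≠ 0 → ΔX i j = 0) ∧
      (X₀ + ΔX).mulVec v = lam • v := by
  set r : Fin (n + 1) → ℝ := fun i => lam * v i - X₀.mulVec v i with hr
  set a : Fin (n + 1) → ℝ := fun i =>
    if i = 0 then (r 0 - ∑ j ∈ Finset.univ \ {0}, (r j / v 0) * v j) / (2 * v 0)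
    else r i / v 0 with ha
  refine ⟨fun i j => (if j = 0 then a i else 0) + (if i = 0 then a j else 0), ?_, ?_, ?_⟩
  · ext i j
    simp [Matrix.transpose_apply, add_comm]
    simp only [Matrix.transpose, Matrix.of_apply]
    exact add_comm _ _
  · intro i j hi hj
    simp [hi, hj]
  · have key : ∀ i, (∑ j, (if j = 0 then a i else 0) * v j)
        + (∑ j, (if i = 0 then a j else 0) * v j) = r i := by
      intro i
      have h1 : ∑ j, (if j = 0 then a i else 0) * v j = a i * v 0 := by
        rw [Finset.sum_congr rfl (fun j _ => by rw [ite_mul, zero_mul]),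
          Finset.sum_ite_eq' Finset.univ 0 (fun j => a i * v j)]
        simp
      by_cases hi : i = 0
      · subst hi
        rw [h1]
        have h2 : ∑ j, (if (0 : Fin (n+1)) = 0 then a j else 0) * v j
            = a 0 * v 0 + ∑ j ∈ Finset.univ \ {0}, a j * v j := by
          simp only [if_pos rfl]
          rw [← Finset.sum_sdiff (Finset.subset_univ {(0 : Fin (n+1))})]
          simp [add_comm]
        rw [h2]
        have h3 : ∑ j ∈ Finset.univ \ {(0 : Fin (n+1))}, a j * v j
            = ∑ j ∈ Finset.univ \ {0}, (r j / v 0) * v j := by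
          refine Finset.sum_congr rfl fun j hj => ?_
          have : j ≠ 0 := by simpa using (Finset.mem_sdiff.mp hj).2
          simp [ha, this]
        rw [h3]
        have ha0 : a 0 = (r 0 - ∑ j ∈ Finset.univ \ {0}, (r j / v 0) * v j) / (2 * v 0) := by
          simp [ha]
        rw [ha0]
        field_simp
        ring
      · have h2 : ∑ j, (if i = 0 then a j else 0) * v j = 0 := by
          simp [hi]
        rw [h1, h2]
        have : a i = r i / v 0 := by simp [ha, hi]
        rw [this]
        field_simp
        simp
    funext i
    have hk := key i
    simp only [Matrix.mulVec, dotProduct, Matrix.add_apply, add_mul,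
      Finset.sum_add_distrib, Pi.smul_apply, smul_eq_mul]
    have hri : r i = lam * v i - ∑ x, X₀ i x * v x := by
      simp [hr, Matrix.mulVec, dotProduct]
    have e : ∀ x, (@HAdd.hAdd (Matrix (Fin (n + 1)) (Fin (n + 1)) ℝ) (Matrix (Fin (n + 1)) (Fin (n + 1)) ℝ)
        (Matrix (Fin (n + 1)) (Fin (n + 1)) ℝ) _ X₀
        (fun i j => (if j = 0 then a i else 0) + (if i = 0 then a j else 0))) i x
        = X₀ i x + ((if x = 0 then a i else 0) + (if i = 0 then a x else 0)) := fun x => rfl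
    simp only [e, add_mul, Finset.sum_add_distrib]
    rw [hk, hri]
    ring
end

section
/- Let X₀ be a real symmetric n×n matrix, λ* ∈ ℝ, and v* ∈ ℝⁿ with v*₁ = 1. Define δx = V⁻¹(λ*I − X₀)v* ∈ ℝⁿ, where V = [v*, e₂, …, eₙ]. Let ΔX₀ be the symmetric matrix with first column (and first row) equal to δx and all other entries zero (with ΔX₀_{11} = δx₁). Then (X₀ + ΔX₀) v* = λ* v*. -/
open Matrix

/-- The explicit single-agent perturbation: with `v*₁ = 1`, `δx = V⁻¹ (λ* I - X₀) v*`,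
and `ΔX₀` the symmetric matrix with first row and column equal to `δx` and zeros
elsewhere, we have `(X₀ + ΔX₀) v* = λ* v*`. -/
theorem explicit_perturbation_works {n : ℕ} (X₀ : Matrix (Fin (n + 1)) (Fin (n + 1)) ℝ)
    (hsym : X₀ᵀ = X₀) (lam : ℝ) (v : Fin (n + 1) → ℝ) (hv : v 0 = 1) :
    let W : Matrix (Fin (n + 1)) (Fin (n + 1)) ℝ :=
      Matrix.of fun i j =>
        if i = 0 then (if j = 0 then 1 / v 0 else -(v j) / v 0)
        else if i = j then 1 else 0
    let δx : Fin (n + 1) → ℝ := W.mulVec ((lam • (1 : Matrix (Fin (n + 1)) (Fin (n + 1)) ℝ) - X₀).mulVec v)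
    let ΔX : Matrix (Fin (n + 1)) (Fin (n + 1)) ℝ :=
      Matrix.of fun i j => if i = 0 then δx j else if j = 0 then δx i else 0
    (X₀ + ΔX).mulVec v = lam • v := by
  intro W δx ΔX
  set y : Fin (n + 1) → ℝ := (lam • (1 : Matrix (Fin (n + 1)) (Fin (n + 1)) ℝ) - X₀).mulVec v with hydef
  have hδ : δx = W.mulVec y := rfl
  have hδne : ∀ i : Fin (n + 1), i ≠ 0 → δx i = y i := by
    intro i hi
    rw [hδ]
    simp only [mulVec, dotProduct, W, Matrix.of_apply, if_neg hi, ite_mul, one_mul, zero_mul]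
    simp
  have hδ0 : δx 0 = y 0 + ∑ j : Fin n, -(v j.succ) * y j.succ := by
    rw [hδ]
    show ∑ x, (W 0 x) * y x = _
    rw [Fin.sum_univ_succ]
    simp [W, hv, Fin.succ_ne_zero]
  have key : ΔX.mulVec v = y := by
    funext i
    rcases eq_or_ne i 0 with rfl | hi
    · have h1 : ΔX.mulVec v 0 = ∑ x, δx x * v x := by
        simp only [mulVec, dotProduct]
        refine Finset.sum_congr rfl fun x _ => ?_
        show (if (0 : Fin (n+1)) = 0 then δx x else if x = 0 then δx 0 else 0) * v x = δx x * v x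
        rw [if_pos rfl]
      rw [h1, Fin.sum_univ_succ, hδ0, hv, mul_one]
      have h2 : ∑ j : Fin n, δx j.succ * v j.succ = ∑ j : Fin n, y j.succ * v j.succ :=
        Finset.sum_congr rfl fun j _ => by rw [hδne _ (Fin.succ_ne_zero j)]
      have h3 : ∑ j : Fin n, -(v j.succ) * y j.succ = -∑ j : Fin n, y j.succ * v j.succ := by
        rw [← Finset.sum_neg_distrib]
        exact Finset.sum_congr rfl fun j _ => by ring
      rw [h2, h3]; ring
    · have h1 : ΔX.mulVec v i = ∑ x, (if x = 0 then δx i else 0) * v x := by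
        simp only [mulVec, dotProduct]
        refine Finset.sum_congr rfl fun x _ => ?_
        show (if i = 0 then δx x else if x = 0 then δx i else 0) * v x = (if x = 0 then δx i else 0) * v x
        rw [if_neg hi]
      rw [h1, Fin.sum_univ_succ]
      simp [Fin.succ_ne_zero, hv, hδne i hi]
  have h4 : (X₀ + ΔX).mulVec v = X₀.mulVec v + ΔX.mulVec v := add_mulVec _ _ _
  rw [h4, key, hydef]
  simp [sub_mulVec, smul_mulVec]
end

section
/- Let X₀ be a real symmetric n×n matrix with simple largest eigenvalue λ₁ > 0 and unit eigenvector w₁ whose entries are all nonzero. Then there exists t₀ < 1/λ₁ such that for all t ∈ (t₀, 1/λ₁), every entry of X(t) = X₀(I − tX₀)⁻¹ is nonzero and sign(X(t)_{ij}) = sign((w₁)_i (w₁)_j) for all i, j. -/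
open Matrix Filter Topology

/-- For symmetric `X₀` with simple, strictly largest eigenvalue `λ₁ > 0` and unit
eigenvector `w₁` with no zero entries, eventually (for `t` close to `1/λ₁` from below)
every entry of `X(t) = X₀ (I - t X₀)⁻¹` is nonzero with sign `sign((w₁)ᵢ (w₁)ⱼ)`. -/
theorem eventual_sign_pattern {n : ℕ} (X₀ : Matrix (Fin n) (Fin n) ℝ)
    (hsym : X₀ᵀ = X₀) (lam1 : ℝ) (hpos : 0 < lam1) (w1 : Fin n → ℝ)
    (heig : X₀.mulVec w1 = lam1 • w1)
    (hunit : ∑ i, w1 i ^ 2 = 1)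
    (hnz : ∀ i, w1 i ≠ 0)
    (hsimple : ∀ v : Fin n → ℝ, v ≠ 0 → X₀.mulVec v = lam1 • v → ∃ c : ℝ, v = c • w1)
    (hmax : ∀ μ : ℝ, μ ≠ lam1 → (∃ v, v ≠ 0 ∧ X₀.mulVec v = μ • v) → μ < lam1) :
    ∃ t₀ : ℝ, t₀ < 1 / lam1 ∧ ∀ t ∈ Set.Ioo t₀ (1 / lam1), ∀ i j,
      (X₀ * ((1 : Matrix (Fin n) (Fin n) ℝ) - t • X₀)⁻¹) i j ≠ 0 ∧
      Real.sign ((X₀ * (1 - t • X₀)⁻¹) i j) = Real.sign (w1 i * w1 j) := by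
  classical
  have hlam : lam1 ≠ 0 := ne_of_gt hpos
  set s : ℝ := 1 / lam1 with hsdef
  set P : Matrix (Fin n) (Fin n) ℝ := Matrix.of (fun i j => w1 i * w1 j) with hPdef
  have hm : ∀ i, ∑ k, X₀ i k * w1 k = lam1 * w1 i := by
    intro i
    have := congrFun heig i
    simpa [Matrix.mulVec, dotProduct] using this
  have hsym' : ∀ i j, X₀ i j = X₀ j i := by
    intro i j
    conv_lhs => rw [← hsym]
    rfl
  have hPP : P * P = P := by
    ext i j
    simp only [Matrix.mul_apply, hPdef, Matrix.of_apply]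
    have h1 : ∀ k, w1 i * w1 k * (w1 k * w1 j) = (w1 i * w1 j) * w1 k ^ 2 := by
      intro k; ring
    rw [Finset.sum_congr rfl (fun k _ => h1 k), ← Finset.mul_sum, hunit, mul_one]
  have hXP : X₀ * P = lam1 • P := by
    ext i j
    simp only [Matrix.mul_apply, hPdef, Matrix.of_apply, Matrix.smul_apply, smul_eq_mul]
    have h1 : ∀ k, X₀ i k * (w1 k * w1 j) = (X₀ i k * w1 k) * w1 j := by intro k; ring
    rw [Finset.sum_congr rfl (fun k _ => h1 k), ← Finset.sum_mul, hm]
    ring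
  have hPX : P * X₀ = lam1 • P := by
    ext i j
    simp only [Matrix.mul_apply, hPdef, Matrix.of_apply, Matrix.smul_apply, smul_eq_mul]
    have h1 : ∀ k, w1 i * w1 k * X₀ k j = (X₀ j k * w1 k) * w1 i := by
      intro k; rw [hsym' k j]; ring
    rw [Finset.sum_congr rfl (fun k _ => h1 k), ← Finset.sum_mul, hm]
    ring
  have hPw : P.mulVec w1 = w1 := by
    ext i
    simp only [Matrix.mulVec, dotProduct, hPdef, Matrix.of_apply]
    have h1 : ∀ k, w1 i * w1 k * w1 k = w1 i * w1 k ^ 2 := by intro k; ring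
    rw [Finset.sum_congr rfl (fun k _ => h1 k), ← Finset.mul_sum, hunit, mul_one]
  set Y : Matrix (Fin n) (Fin n) ℝ := X₀ - lam1 • P with hYdef
  have hXeq : X₀ = Y + lam1 • P := by
    rw [hYdef, sub_add_cancel]
  have hYP : Y * P = 0 := by
    rw [hYdef, Matrix.sub_mul, hXP, Matrix.smul_mul, hPP, sub_self]
  have hPY : P * Y = 0 := by
    rw [hYdef, Matrix.mul_sub, hPX, Matrix.mul_smul, hPP, sub_self]
  have hYw : Y.mulVec w1 = 0 := by
    rw [hYdef, Matrix.sub_mulVec, heig, Matrix.smul_mulVec, hPw, sub_self]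
  have hslam : s * lam1 = 1 := by rw [hsdef]; exact one_div_mul_cancel hlam
  -- I - s•Y is invertible
  have hdet : (1 - s • Y).det ≠ 0 := by
    intro h
    obtain ⟨v, hv0, hv⟩ := (Matrix.exists_mulVec_eq_zero_iff).2 h
    have h2 : v = s • Y.mulVec v := by
      have h1 : v - s • Y.mulVec v = 0 := by
        simpa [Matrix.sub_mulVec, Matrix.smul_mulVec, Matrix.one_mulVec] using hv
      exact sub_eq_zero.mp h1
    have hYv : Y.mulVec v = lam1 • v := by
      have : lam1 • v = Y.mulVec v := by
        rw [h2, smul_smul, mul_comm lam1 s, hslam, one_smul, ← h2]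
      exact this.symm
    have hPv : P.mulVec v = 0 := by
      have h3 : P.mulVec (Y.mulVec v) = 0 := by
        rw [Matrix.mulVec_mulVec, hPY, Matrix.zero_mulVec]
      rw [hYv, Matrix.mulVec_smul] at h3
      exact (smul_eq_zero.mp h3).resolve_left hlam
    have hXv : X₀.mulVec v = lam1 • v := by
      rw [hXeq, Matrix.add_mulVec, hYv, Matrix.smul_mulVec, hPv, smul_zero, add_zero]
    obtain ⟨c, hc⟩ := hsimple v hv0 hXv
    have hY0 : Y.mulVec v = 0 := by
      rw [hc, Matrix.mulVec_smul, hYw, smul_zero]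
    rw [hYv] at hY0
    exact hv0 ((smul_eq_zero.mp hY0).resolve_left hlam)
  -- key inverse formula
  have key : ∀ t : ℝ, (1 - t • Y).det ≠ 0 → 1 - t * lam1 ≠ 0 →
      ((1 : Matrix (Fin n) (Fin n) ℝ) - t • X₀)⁻¹
        = (1 - t * lam1)⁻¹ • P + ((1 - t • Y)⁻¹ - P) := by
    intro t hN h2
    have hNP : (1 - t • Y) * P = P := by
      rw [Matrix.sub_mul, Matrix.one_mul, Matrix.smul_mul, hYP, smul_zero, sub_zero]
    have hNinv : (1 - t • Y) * (1 - t • Y)⁻¹ = 1 := Matrix.mul_nonsing_inv _ (isUnit_iff_ne_zero.mpr hN)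
    have hPN : P * (1 - t • Y) = P := by
      rw [Matrix.mul_sub, Matrix.mul_one, Matrix.mul_smul, hPY, smul_zero, sub_zero]
    have hPNi : P * (1 - t • Y)⁻¹ = P := by
      calc P * (1 - t • Y)⁻¹ = (P * (1 - t • Y)) * (1 - t • Y)⁻¹ := by rw [hPN]
        _ = P * ((1 - t • Y) * (1 - t • Y)⁻¹) := by rw [Matrix.mul_assoc]
        _ = P := by rw [hNinv, Matrix.mul_one]
    apply Matrix.inv_eq_right_inv
    have hX : (1 : Matrix (Fin n) (Fin n) ℝ) - t • X₀ = (1 - t • Y) - (t * lam1) • P := by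
      rw [hXeq, smul_add, smul_smul]; abel
    rw [hX, Matrix.sub_mul]
    simp only [Matrix.mul_add, Matrix.mul_sub, Matrix.mul_smul, Matrix.smul_mul,
      hNP, hNinv, hPP, hPNi]
    rw [sub_self, add_zero, smul_smul]
    match_scalars <;> field_simp <;> ring
  -- entrywise formula
  have entry : ∀ t : ℝ, (1 - t • Y).det ≠ 0 → 1 - t * lam1 ≠ 0 → ∀ i j,
      (X₀ * ((1 : Matrix (Fin n) (Fin n) ℝ) - t • X₀)⁻¹) i j
        = ((X₀ * (1 - t • Y)⁻¹) i j - lam1 * (w1 i * w1 j))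
            + lam1 * (1 - t * lam1)⁻¹ * (w1 i * w1 j) := by
    intro t h1 h2 i j
    rw [key t h1 h2, Matrix.mul_add, Matrix.mul_sub, Matrix.mul_smul, hXP]
    simp only [Matrix.add_apply, Matrix.sub_apply, Matrix.smul_apply, hPdef, Matrix.of_apply,
      smul_eq_mul]
    ring
  -- continuity facts
  have hF : Continuous fun t : ℝ => (1 : Matrix (Fin n) (Fin n) ℝ) - t • Y :=
    continuous_const.sub (continuous_id.smul continuous_const)
  have hdetC : ContinuousAt (fun t : ℝ => (1 - t • Y).det) s :=
    (hF.matrix_det).continuousAt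
  have hEvDet : ∀ᶠ t in 𝓝[<] s, (1 - t • Y).det ≠ 0 :=
    (hdetC.eventually_ne hdet).filter_mono nhdsWithin_le_nhds
  have hmemIio : ∀ᶠ t in 𝓝[<] s, t ∈ Set.Iio s := eventually_mem_nhdsWithin
  have hsub : ∀ t ∈ Set.Iio s, 0 < 1 - t * lam1 := by
    intro t ht
    have : t * lam1 < 1 := (lt_div_iff₀ hpos).mp ht
    linarith
  -- (1 - t lam1)⁻¹ → +∞ as t → s⁻
  have hc : Tendsto (fun t : ℝ => (1 - t * lam1)⁻¹) (𝓝[<] s) atTop := by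
    apply tendsto_inv_nhdsGT_zero.comp
    rw [tendsto_nhdsWithin_iff]
    constructor
    · have hcont : Continuous fun t : ℝ => 1 - t * lam1 :=
        continuous_const.sub (continuous_id.mul continuous_const)
      have h0 : 1 - s * lam1 = 0 := by rw [hslam]; ring
      have := (hcont.tendsto s).mono_left (nhdsWithin_le_nhds : 𝓝[<] s ≤ 𝓝 s)
      rwa [h0] at this
    · exact hmemIio.mono fun t ht => hsub t ht
  -- the remainder entries have finite limits
  have hRc : ∀ i j, ContinuousAt (fun t : ℝ => (X₀ * (1 - t • Y)⁻¹) i j) s := by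
    intro i j
    have h1 : ∀ t : ℝ, (X₀ * (1 - t • Y)⁻¹) i j
        = ((1 - t • Y).det)⁻¹ * ((X₀ * (1 - t • Y).adjugate) i j) := by
      intro t
      rw [Matrix.inv_def, Matrix.mul_smul, Matrix.smul_apply, Ring.inverse_eq_inv', smul_eq_mul]
    simp only [h1]
    exact (hdetC.inv₀ hdet).mul
      ((continuous_const.matrix_mul hF.matrix_adjugate).matrix_elem i j).continuousAt
  -- main eventual claim for each entry
  have main : ∀ i j, ∀ᶠ t in 𝓝[<] s,
      (X₀ * ((1 : Matrix (Fin n) (Fin n) ℝ) - t • X₀)⁻¹) i j ≠ 0 ∧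
      Real.sign ((X₀ * (1 - t • X₀)⁻¹) i j) = Real.sign (w1 i * w1 j) := by
    intro i j
    set a : ℝ := w1 i * w1 j with hadef
    have ha : a ≠ 0 := mul_ne_zero (hnz i) (hnz j)
    have hE : ∀ᶠ t in 𝓝[<] s,
        (X₀ * ((1 : Matrix (Fin n) (Fin n) ℝ) - t • X₀)⁻¹) i j
          = ((X₀ * (1 - t • Y)⁻¹) i j - lam1 * a) + lam1 * (1 - t * lam1)⁻¹ * a := by
      filter_upwards [hEvDet, hmemIio] with t h1 h2
      exact entry t h1 (ne_of_gt (hsub t h2)) i j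
    have hRlim : Tendsto (fun t => (X₀ * (1 - t • Y)⁻¹) i j - lam1 * a) (𝓝[<] s)
        (𝓝 ((X₀ * (1 - s • Y)⁻¹) i j - lam1 * a)) :=
      (((hRc i j).tendsto).mono_left nhdsWithin_le_nhds).sub tendsto_const_nhds
    rcases ha.lt_or_gt with hneg | hpos'
    · -- a < 0 : entries tend to -∞
      have hbig : Tendsto (fun t : ℝ => lam1 * (1 - t * lam1)⁻¹ * a) (𝓝[<] s) atBot :=
        Tendsto.atTop_mul_const_of_neg hneg (hc.const_mul_atTop hpos)
      have hT : Tendsto (fun t : ℝ =>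
          ((X₀ * (1 - t • Y)⁻¹) i j - lam1 * a) + lam1 * (1 - t * lam1)⁻¹ * a)
          (𝓝[<] s) atBot := hRlim.add_atBot hbig
      have hev : ∀ᶠ t in 𝓝[<] s,
          ((X₀ * (1 - t • Y)⁻¹) i j - lam1 * a) + lam1 * (1 - t * lam1)⁻¹ * a < 0 :=
        hT.eventually_lt_atBot 0
      filter_upwards [hE, hev] with t h1 h2
      rw [h1]
      exact ⟨ne_of_lt h2, by rw [Real.sign_of_neg h2, Real.sign_of_neg hneg]⟩
    · -- a > 0 : entries tend to +∞
      have hbig : Tendsto (fun t : ℝ => lam1 * (1 - t * lam1)⁻¹ * a) (𝓝[<] s) atTop :=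
        Tendsto.atTop_mul_const hpos' (hc.const_mul_atTop hpos)
      have hT : Tendsto (fun t : ℝ =>
          ((X₀ * (1 - t • Y)⁻¹) i j - lam1 * a) + lam1 * (1 - t * lam1)⁻¹ * a)
          (𝓝[<] s) atTop := hRlim.add_atTop hbig
      have hev : ∀ᶠ t in 𝓝[<] s,
          0 < ((X₀ * (1 - t • Y)⁻¹) i j - lam1 * a) + lam1 * (1 - t * lam1)⁻¹ * a :=
        hT.eventually_gt_atTop 0
      filter_upwards [hE, hev] with t h1 h2
      rw [h1]
      exact ⟨ne_of_gt h2, by rw [Real.sign_of_pos h2, Real.sign_of_pos hpos']⟩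
  have hall : ∀ᶠ t in 𝓝[<] s, ∀ i j,
      (X₀ * ((1 : Matrix (Fin n) (Fin n) ℝ) - t • X₀)⁻¹) i j ≠ 0 ∧
      Real.sign ((X₀ * (1 - t • X₀)⁻¹) i j) = Real.sign (w1 i * w1 j) :=
    eventually_all.2 fun i => eventually_all.2 fun j => main i j
  obtain ⟨t₀, ht₀, hIoo⟩ := mem_nhdsLT_iff_exists_Ioo_subset.1 hall
  exact ⟨t₀, ht₀, fun t ht i j => hIoo ht i j⟩
end

section
/- Let v* ∈ ℝⁿ with v*₁ = 1, let α ∈ ℝ^{n−1} with α_i = v*_{i+1}, let L = λ*I − X₀ for a symmetric matrix X₀ and λ* ∈ ℝ, let L₁ be the first column of L, and let L̄ be the principal submatrix of L obtained by deleting the first row and column. Then, with ΔX₀ first column δx = V⁻¹ L v* as in the construction, we have ‖δx‖ ≤ ‖L₁‖ + ‖(−αᵀ L̄ α, L̄ α)‖, where the second term vanishes when α = 0. In particular, when v* = e₁, ‖δx‖ = ‖L₁‖ = ‖(λ*I − X₀)e₁‖. -/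
open Matrix

lemma sqrt_sum_sq_add_le {m : ℕ} (f g : Fin m → ℝ) :
    Real.sqrt (∑ i, (f i + g i) ^ 2) ≤
      Real.sqrt (∑ i, f i ^ 2) + Real.sqrt (∑ i, g i ^ 2) := by
  have h := norm_add_le ((WithLp.equiv 2 (Fin m → ℝ)).symm f)
      ((WithLp.equiv 2 (Fin m → ℝ)).symm g)
  simpa [EuclideanSpace.norm_eq, Real.norm_eq_abs, sq_abs,
    WithLp.equiv_symm_apply, ← WithLp.toLp_add] using h

/-- Norm bound for the single-agent perturbation: with `v*₁ = 1`, `α = (v*₂,…,v*ₙ)`,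
`L = λ* I - X₀`, `L₁` the first column of `L` and `L̄` the lower-right principal
submatrix, the perturbation `δx = V⁻¹ L v*` satisfies
`‖δx‖ ≤ ‖L₁‖ + ‖(-αᵀ L̄ α, L̄ α)‖`; the second term vanishes when `α = 0`, and when
`v* = e₁`, `‖δx‖ = ‖L₁‖`. -/
theorem perturbation_norm_bound {n : ℕ} (X₀ : Matrix (Fin (n + 1)) (Fin (n + 1)) ℝ)
    (hsym : X₀ᵀ = X₀) (lam : ℝ) (v : Fin (n + 1) → ℝ) (hv : v 0 = 1) :
    let L : Matrix (Fin (n + 1)) (Fin (n + 1)) ℝ :=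
      lam • (1 : Matrix (Fin (n + 1)) (Fin (n + 1)) ℝ) - X₀
    let L₁ : Fin (n + 1) → ℝ := fun i => L i 0
    let Lbar : Matrix (Fin n) (Fin n) ℝ := Matrix.of fun i j => L i.succ j.succ
    let α : Fin n → ℝ := fun i => v i.succ
    let W : Matrix (Fin (n + 1)) (Fin (n + 1)) ℝ :=
      Matrix.of fun i j =>
        if i = 0 then (if j = 0 then 1 / v 0 else -(v j) / v 0)
        else if i = j then 1 else 0
    let δx : Fin (n + 1) → ℝ := W.mulVec (L.mulVec v)
    let z : Fin (n + 1) → ℝ := Fin.cons (-(α ⬝ᵥ Lbar.mulVec α)) (Lbar.mulVec α)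
    Real.sqrt (∑ i, δx i ^ 2) ≤ Real.sqrt (∑ i, L₁ i ^ 2) + Real.sqrt (∑ i, z i ^ 2) ∧
    (α = 0 → Real.sqrt (∑ i, z i ^ 2) = 0) ∧
    ((v = fun i => if i = 0 then 1 else 0) →
      Real.sqrt (∑ i, δx i ^ 2) = Real.sqrt (∑ i, L₁ i ^ 2)) := by
  intro L L₁ Lbar α W δx z
  have hLsym : ∀ i j, L i j = L j i := by
    intro i j
    have hX : X₀ i j = X₀ j i := congrFun (congrFun hsym j) i
    rcases eq_or_ne i j with h | h
    · simp [h]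
    · simp [L, Matrix.one_apply, hX, h, Ne.symm h]
  set u : Fin (n + 1) → ℝ := L.mulVec v with hu_def
  have hu : ∀ i : Fin n, u i.succ = L₁ i.succ + (Lbar.mulVec α) i := by
    intro i
    simp [hu_def, Matrix.mulVec, dotProduct, Fin.sum_univ_succ, hv, L₁, Lbar, α]
  have key : ∀ i, δx i = L₁ i + z i := by
    intro i
    induction i using Fin.cases with
    | zero =>
        have hδ0 : δx 0 = u 0 + ∑ j : Fin n, -(v j.succ) * u j.succ := by
          show (W.mulVec u) 0 = _
          simp [W, Matrix.mulVec, dotProduct, Fin.sum_univ_succ, hv,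
            Fin.succ_ne_zero]
        have h0 : u 0 = L 0 0 + ∑ k : Fin n, L 0 k.succ * v k.succ := by
          simp [hu_def, Matrix.mulVec, dotProduct, Fin.sum_univ_succ, hv]
        have h2 : ∑ j : Fin n, -(v j.succ) * u j.succ
            = -(∑ j : Fin n, v j.succ * L j.succ 0) - α ⬝ᵥ Lbar.mulVec α := by
          simp only [hu]
          simp only [dotProduct, α, L₁, mul_add, neg_mul, Finset.sum_add_distrib,
            Finset.sum_neg_distrib]
          ring
        rw [hδ0, h0, h2]
        have hsw : ∑ k : Fin n, L 0 k.succ * v k.succ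
            = ∑ j : Fin n, v j.succ * L j.succ 0 := by
          refine Finset.sum_congr rfl fun k _ => ?_
          rw [hLsym 0 k.succ]; ring
        rw [hsw]
        simp [z, L₁]
        ring
    | succ i =>
        have hδ : δx i.succ = u i.succ := by
          show (W.mulVec u) i.succ = _
          simp [W, Matrix.mulVec, dotProduct, Fin.succ_ne_zero, ite_mul,
            Finset.sum_ite_eq]
        rw [hδ, hu]
        simp [z]
  refine ⟨?_, ?_, ?_⟩
  · calc Real.sqrt (∑ i, δx i ^ 2) = Real.sqrt (∑ i, (L₁ i + z i) ^ 2) := by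
          simp only [key]
      _ ≤ _ := sqrt_sum_sq_add_le L₁ z
  · intro hα
    have hz : z = 0 := by
      funext i
      induction i using Fin.cases with
      | zero => simp [z, hα]
      | succ i => simp [z, hα]
    simp [hz]
  · intro hve
    have hα : α = 0 := by
      funext i
      simp [α, hve, Fin.succ_ne_zero]
    have hz : ∀ i, z i = 0 := by
      intro i
      induction i using Fin.cases with
      | zero => simp [z, hα]
      | succ i => simp [z, hα]
    congr 1
    refine Finset.sum_congr rfl fun i _ => ?_
    rw [key i, hz i, add_zero]
end
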